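/- Let R = ℝ⟨⟨t⟩⟩ be the field of formal real Puiseux series with its natural valuation, and C = ℂ⟨⟨t⟩⟩ its algebraic closure. Let V ⊆ C^n be the zero set of a linear ideal I generated by linear forms with coefficients in R. If x ∈ V has all coordinates weakly positive (each coordinate has real positive leading coefficient), then x + x̄ ∈ V, all coordinates of x + x̄ are positive elements of R, and val(x + x̄) = val(x) coordinatewise. Consequently val(V ∩ C^n_{weakly>0}) = val(V ∩ R^n_{>0}). -/

import Mathlib

/-- Coefficientwise complex conjugation on formal (complex Puiseux/Hahn) series. -/
noncomputable def conjPS (x : HahnSeries ℚ ℂ) : HahnSeries ℚ ℂ where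
  coeff q := starRingEnd ℂ (x.coeff q)
  isPWO_support' := by
    have h : (Function.support fun q => starRingEnd ℂ (x.coeff q)) = Function.support x.coeff := by
      ext q
      simp [Function.mem_support, map_eq_zero]
    rw [h]
    exact x.isPWO_support'

/-- A series is real if all its coefficients are real. -/
def IsRealPS (x : HahnSeries ℚ ℂ) : Prop := ∀ q : ℚ, (x.coeff q).im = 0

/-- A nonzero series is weakly positive if its leading coefficient is real and positive. -/
def WeaklyPosPS (x : HahnSeries ℚ ℂ) : Prop :=
  x ≠ 0 ∧ x.leadingCoeff.im = 0 ∧ 0 < x.leadingCoeff.re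

/-- A nonzero series is positive if it is real with positive leading coefficient. -/
def PosPS (x : HahnSeries ℚ ℂ) : Prop :=
  x ≠ 0 ∧ IsRealPS x ∧ 0 < x.leadingCoeff.re

/-- Let `V ⊆ C^n` be the zero set of a linear ideal generated by linear
forms with real (Puiseux) coefficients, over `C = ℂ⟨⟨t⟩⟩` with real subfield `R = ℝ⟨⟨t⟩⟩`.
If `x ∈ V` has all coordinates weakly positive, then `x + x̄ ∈ V`, all coordinates of
`x + x̄` are positive elements of `R`, and `val (x + x̄) = val x` coordinatewise.
Consequently `val (V ∩ C^n_{weakly>0}) = val (V ∩ R^n_{>0})`. -/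
lemma conjPS_coeff (x : HahnSeries ℚ ℂ) (q : ℚ) :
    (conjPS x).coeff q = starRingEnd ℂ (x.coeff q) := rfl

lemma conjPS_eq_map (x : HahnSeries ℚ ℂ) :
    conjPS x = x.map (starRingEnd ℂ) := by
  ext q; rfl

lemma conjPS_of_real {x : HahnSeries ℚ ℂ} (hx : IsRealPS x) : conjPS x = x := by
  ext q
  rw [conjPS_coeff]
  exact Complex.conj_eq_iff_im.2 (hx q)

lemma conjPS_mul (x y : HahnSeries ℚ ℂ) :
    conjPS (x * y) = conjPS x * conjPS y := by
  simp only [conjPS_eq_map]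
  exact HahnSeries.map_mul (starRingEnd ℂ).toNonUnitalRingHom

lemma conjPS_sum {s : Finset (Fin n)} {f : Fin n → HahnSeries ℚ ℂ} :
    conjPS (∑ i ∈ s, f i) = ∑ i ∈ s, conjPS (f i) := by
  ext q
  rw [conjPS_coeff]
  have h1 : (∑ i ∈ s, f i).coeff q = ∑ i ∈ s, (f i).coeff q := by
    exact map_sum (HahnSeries.coeff.addMonoidHom q) f s
  have h2 : (∑ i ∈ s, conjPS (f i)).coeff q = ∑ i ∈ s, (conjPS (f i)).coeff q :=
    map_sum (HahnSeries.coeff.addMonoidHom q) _ s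
  rw [h1, h2, map_sum]
  rfl

lemma key_order {x : HahnSeries ℚ ℂ} (hx : WeaklyPosPS x) :
    (x + conjPS x) ≠ 0 ∧ (x + conjPS x).order = x.order := by
  obtain ⟨hne, him, hre⟩ := hx
  set y := x + conjPS x with hy
  have hyc : ∀ q, y.coeff q = x.coeff q + starRingEnd ℂ (x.coeff q) := fun q => rfl
  have hco : y.coeff x.order = 2 * x.leadingCoeff.re := by
    rw [hyc]
    have : x.coeff x.order = x.leadingCoeff := HahnSeries.leadingCoeff_eq.symm
    rw [this, Complex.add_conj]
    norm_num
  have hne2 : y.coeff x.order ≠ 0 := by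
    rw [hco]
    simp only [ne_eq, Complex.ofReal_eq_zero]
    exact_mod_cast by positivity
  have hyne : y ≠ 0 := HahnSeries.ne_zero_of_coeff_ne_zero hne2
  refine ⟨hyne, ?_⟩
  have hle : y.order ≤ x.order := HahnSeries.order_le_of_coeff_ne_zero hne2
  rcases lt_or_eq_of_le hle with hlt | heq
  · exfalso
    have h0 : x.coeff y.order = 0 := HahnSeries.coeff_eq_zero_of_lt_order hlt
    have : y.coeff y.order = 0 := by rw [hyc, h0]; simp
    exact hyne (HahnSeries.coeff_order_eq_zero.1 this)
  · exact heq

theorem stmt3 {n : ℕ} {ι : Type*} (L : ι → Fin n → HahnSeries ℚ ℂ)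
    (hL : ∀ k i, IsRealPS (L k i)) :
    let V : Set (Fin n → HahnSeries ℚ ℂ) := {x | ∀ k, ∑ i, L k i * x i = 0}
    (∀ x ∈ V, (∀ i, WeaklyPosPS (x i)) →
      ((fun i => x i + conjPS (x i)) ∈ V ∧
        (∀ i, PosPS (x i + conjPS (x i))) ∧
        (∀ i, (x i + conjPS (x i)).order = (x i).order))) ∧
    {w : Fin n → ℚ | ∃ x ∈ V, (∀ i, WeaklyPosPS (x i)) ∧ ∀ i, (x i).order = w i}
      = {w : Fin n → ℚ | ∃ x ∈ V, (∀ i, PosPS (x i)) ∧ ∀ i, (x i).order = w i} := by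
  intro V
  have main : ∀ x ∈ V, (∀ i, WeaklyPosPS (x i)) →
      ((fun i => x i + conjPS (x i)) ∈ V ∧
        (∀ i, PosPS (x i + conjPS (x i))) ∧
        (∀ i, (x i + conjPS (x i)).order = (x i).order)) := by
    intro x hxV hpos
    have hconjV : ∀ k, ∑ i, L k i * conjPS (x i) = 0 := by
      intro k
      have h := congrArg conjPS (hxV k)
      have h0 : conjPS 0 = 0 := by ext q; simp [conjPS_coeff]
      rw [conjPS_sum, h0] at h
      calc ∑ i, L k i * conjPS (x i)
          = ∑ i, conjPS (L k i * x i) := by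
            refine Finset.sum_congr rfl fun i _ => ?_
            rw [conjPS_mul, conjPS_of_real (hL k i)]
        _ = 0 := h
    have hmemV : (fun i => x i + conjPS (x i)) ∈ V := by
      intro k
      have : ∑ i, L k i * (x i + conjPS (x i))
          = (∑ i, L k i * x i) + ∑ i, L k i * conjPS (x i) := by
        rw [← Finset.sum_add_distrib]
        exact Finset.sum_congr rfl fun i _ => mul_add _ _ _
      rw [this, hxV k, hconjV k, add_zero]
    have horder : ∀ i, (x i + conjPS (x i)).order = (x i).order :=
      fun i => (key_order (hpos i)).2
    refine ⟨hmemV, fun i => ?_, horder⟩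
    obtain ⟨hne, him, hre⟩ := hpos i
    obtain ⟨hyne, hyo⟩ := key_order (hpos i)
    refine ⟨hyne, fun q => ?_, ?_⟩
    · show ((x i).coeff q + starRingEnd ℂ ((x i).coeff q)).im = 0
      rw [Complex.add_conj]
      simp
    · rw [HahnSeries.leadingCoeff_eq, hyo]
      show (0:ℝ) < ((x i).coeff (x i).order + starRingEnd ℂ ((x i).coeff (x i).order)).re
      rw [Complex.add_conj]
      have : (x i).coeff (x i).order = (x i).leadingCoeff := HahnSeries.leadingCoeff_eq.symm
      rw [this]
      simp only [Complex.ofReal_re]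
      positivity
  refine ⟨main, ?_⟩
  ext w
  simp only [Set.mem_setOf_eq]
  constructor
  · rintro ⟨x, hxV, hpos, hw⟩
    obtain ⟨hmem, hposy, hord⟩ := main x hxV hpos
    exact ⟨fun i => x i + conjPS (x i), hmem, hposy, fun i => (hord i).trans (hw i)⟩
  · rintro ⟨x, hxV, hpos, hw⟩
    refine ⟨x, hxV, fun i => ?_, hw⟩
    obtain ⟨hne, hreal, hre⟩ := hpos i
    refine ⟨hne, ?_, hre⟩
    rw [HahnSeries.leadingCoeff_eq]
    exact hreal _
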